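/- Let ω be an environment with potential V, let a < b be integers and let z be an integer with a ≤ z ≤ b. Let (Ω, ℱ, (ℱ_n)_{n∈ℕ}, ℙ) be a filtered probability space and (ξ_n)_{n∈ℕ} an adapted ℤ-valued process with ξ_0 = z constant, such that almost surely for every n, 𝔼[1_{{ξ_{n+1} = ξ_n + 1}} | ℱ_n] = ω⁺_{ξ_n}/(ω⁺_{ξ_n} + ω⁻_{ξ_n}) and 𝔼[1_{{ξ_{n+1} = ξ_n − 1}} | ℱ_n] = ω⁻_{ξ_n}/(ω⁺_{ξ_n} + ω⁻_{ξ_n}). Let τ_a = inf{n ≥ 0 : ξ_n = a} and τ_b = inf{n ≥ 0 : ξ_n = b} be the hitting times of a and b. Then ℙ(τ_a < τ_b) = (Σ_{i=z}^{b−1} e^{V(i)}) / (Σ_{j=a}^{b−1} e^{V(j)}), where the numerator is the empty sum 0 when z = b. -/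

import Mathlib

open Real MeasureTheory ProbabilityTheory

noncomputable def potential (ωm ωp : ℤ → ℝ) : ℤ → ℝ := fun x =>
  if 0 ≤ x then ∑ i ∈ Finset.range x.toNat, Real.log (ωm ((i : ℤ) + 1) / ωp ((i : ℤ) + 1))
  else ∑ i ∈ Finset.range (-x).toNat, Real.log (ωp (x + 1 + (i : ℤ)) / ωm (x + 1 + (i : ℤ)))

lemma log_cancel {p q : ℝ} (hp : 0 < p) (hq : 0 < q) :
    Real.log (p / q) + Real.log (q / p) = 0 := by
  rw [Real.log_div hp.ne' hq.ne', Real.log_div hq.ne' hp.ne']; ring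

lemma potential_step (ωm ωp : ℤ → ℝ) (hm : ∀ x, 0 < ωm x) (hp : ∀ x, 0 < ωp x) (x : ℤ) :
    potential ωm ωp x = potential ωm ωp (x - 1) + Real.log (ωm x / ωp x) := by
  rcases le_or_gt 1 x with hx | hx
  · have h0 : (0:ℤ) ≤ x := by omega
    have h1 : (0:ℤ) ≤ x - 1 := by omega
    have hnat : x.toNat = (x-1).toNat + 1 := by omega
    simp only [potential, if_pos h0, if_pos h1, hnat, Finset.sum_range_succ]
    have harg : ((x-1).toNat : ℤ) + 1 = x := by omega
    rw [harg]
  · have h0 : ¬ (0:ℤ) ≤ x - 1 := by omega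
    have hnat : (-(x-1)).toNat = (-x).toNat + 1 := by omega
    rcases eq_or_lt_of_le (by omega : x ≤ 0) with h | h
    · subst h
      simp only [potential, if_pos le_rfl, if_neg h0, hnat]
      rw [Finset.sum_range_succ]
      norm_num
      rw [← log_cancel (hp 0) (hm 0)]
    · have h0' : ¬ (0:ℤ) ≤ x := by omega
      simp only [potential, if_neg h0, if_neg h0', hnat, Finset.sum_range_succ']
      rw [add_assoc]
      have hz : x - 1 + 1 + ((0:ℕ):ℤ) = x := by norm_num
      rw [hz, log_cancel (hp x) (hm x), add_zero]
      apply Finset.sum_congr rfl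
      intro i _
      congr 2 <;> push_cast <;> ring

lemma exp_potential_step (ωm ωp : ℤ → ℝ) (hm : ∀ x, 0 < ωm x) (hp : ∀ x, 0 < ωp x) (x : ℤ) :
    ωp x * Real.exp (potential ωm ωp x) = ωm x * Real.exp (potential ωm ωp (x - 1)) := by
  rw [potential_step ωm ωp hm hp x, Real.exp_add, Real.exp_log (div_pos (hm x) (hp x))]
  have h := (hp x).ne'
  field_simp

noncomputable def hfun (ωm ωp : ℤ → ℝ) (a b : ℤ) (x : ℤ) : ℝ :=
  (∑ i ∈ Finset.Icc x (b-1), Real.exp (potential ωm ωp i)) /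
    (∑ j ∈ Finset.Icc a (b-1), Real.exp (potential ωm ωp j))

section hfun
variable (ωm ωp : ℤ → ℝ) (a b : ℤ)

lemma Dpos (hab : a < b) : 0 < ∑ j ∈ Finset.Icc a (b-1), Real.exp (potential ωm ωp j) :=
  Finset.sum_pos (fun i _ => Real.exp_pos _) ⟨a, by simp [Finset.mem_Icc]; omega⟩

lemma hfun_nonneg (x : ℤ) : 0 ≤ hfun ωm ωp a b x :=
  div_nonneg (Finset.sum_nonneg fun i _ => (Real.exp_pos _).le)
    (Finset.sum_nonneg fun i _ => (Real.exp_pos _).le)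

lemma hfun_le_one (hab : a < b) (x : ℤ) (hax : a ≤ x) : hfun ωm ωp a b x ≤ 1 := by
  rw [hfun, div_le_one (Dpos ωm ωp a b hab)]
  exact Finset.sum_le_sum_of_subset_of_nonneg
    (Finset.Icc_subset_Icc hax le_rfl) (fun i _ _ => (Real.exp_pos _).le)

lemma hfun_a (hab : a < b) : hfun ωm ωp a b a = 1 :=
  div_self (Dpos ωm ωp a b hab).ne'

lemma hfun_b : hfun ωm ωp a b b = 0 := by
  rw [hfun, Finset.Icc_eq_empty (by omega), Finset.sum_empty, zero_div]

lemma hfun_sub (x : ℤ) (hx : x ≤ b - 1) :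
    hfun ωm ωp a b x - hfun ωm ωp a b (x+1) =
      Real.exp (potential ωm ωp x) / (∑ j ∈ Finset.Icc a (b-1), Real.exp (potential ωm ωp j)) := by
  have hins : Finset.Icc x (b-1) = insert x (Finset.Icc (x+1) (b-1)) := by
    ext i; simp only [Finset.mem_Icc, Finset.mem_insert]; omega
  rw [hfun, hfun, div_sub_div_same, hins, Finset.sum_insert (by simp)]
  ring_nf

lemma hfun_harmonic (hm : ∀ x, 0 < ωm x) (hp : ∀ x, 0 < ωp x) (hab : a < b)
    (x : ℤ) (hx : x < b) :
    ωp x / (ωp x + ωm x) * hfun ωm ωp a b (x+1)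
      + ωm x / (ωp x + ωm x) * hfun ωm ωp a b (x-1) = hfun ωm ωp a b x := by
  have hs : ωp x + ωm x ≠ 0 := (add_pos (hp x) (hm x)).ne'
  have hsum : ωp x / (ωp x + ωm x) + ωm x / (ωp x + ωm x) = 1 := by
    rw [← add_div, div_self hs]
  have key : ωp x * (hfun ωm ωp a b x - hfun ωm ωp a b (x+1))
      = ωm x * (hfun ωm ωp a b (x-1) - hfun ωm ωp a b x) := by
    rw [hfun_sub ωm ωp a b x (by omega)]
    have h2 : hfun ωm ωp a b (x-1) - hfun ωm ωp a b x
        = Real.exp (potential ωm ωp (x-1)) / (∑ j ∈ Finset.Icc a (b-1),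
            Real.exp (potential ωm ωp j)) := by
      have := hfun_sub ωm ωp a b (x-1) (by omega)
      rwa [sub_add_cancel] at this
    rw [h2, ← mul_div_assoc, ← mul_div_assoc, exp_potential_step ωm ωp hm hp x]
  linear_combination hsum * hfun ωm ωp a b x - key / (ωp x + ωm x)
end hfun

def stoppedWalk {Ω : Type*} (ξ : ℕ → Ω → ℤ) (a b : ℤ) : ℕ → Ω → ℤ
  | 0 => ξ 0
  | n+1 => fun ω' => if stoppedWalk ξ a b n ω' = a ∨ stoppedWalk ξ a b n ω' = b
      then stoppedWalk ξ a b n ω' else ξ (n+1) ω'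

section walk
variable {Ω : Type*} (ξ : ℕ → Ω → ℤ) (a b : ℤ)

lemma stoppedWalk_succ (n : ℕ) (ω' : Ω) :
    stoppedWalk ξ a b (n+1) ω' = if stoppedWalk ξ a b n ω' = a ∨ stoppedWalk ξ a b n ω' = b
      then stoppedWalk ξ a b n ω' else ξ (n+1) ω' := rfl

lemma stoppedWalk_eq_of_ne (n : ℕ) (ω' : Ω)
    (h : ¬ (stoppedWalk ξ a b n ω' = a ∨ stoppedWalk ξ a b n ω' = b)) :
    stoppedWalk ξ a b n ω' = ξ n ω' := by
  induction n with
  | zero => rfl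
  | succ n ih =>
    rw [stoppedWalk_succ] at h ⊢
    by_cases hn : stoppedWalk ξ a b n ω' = a ∨ stoppedWalk ξ a b n ω' = b
    · rw [if_pos hn] at h; exact absurd hn h
    · rw [if_neg hn]

lemma stoppedWalk_eq_of_not_hit (n : ℕ) (ω' : Ω)
    (h : ∀ k ≤ n, ¬ (ξ k ω' = a ∨ ξ k ω' = b)) :
    stoppedWalk ξ a b n ω' = ξ n ω' := by
  induction n with
  | zero => rfl
  | succ n ih =>
    have hn : stoppedWalk ξ a b n ω' = ξ n ω' := ih (fun k hk => h k (by omega))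
    rw [stoppedWalk_succ, hn, if_neg (h n (by omega))]

lemma stoppedWalk_mem_Icc (z : ℤ) (haz : a ≤ z) (hzb : z ≤ b) (ω' : Ω)
    (h0 : ξ 0 ω' = z)
    (hG : ∀ k, ξ (k+1) ω' = ξ k ω' + 1 ∨ ξ (k+1) ω' = ξ k ω' - 1) (n : ℕ) :
    a ≤ stoppedWalk ξ a b n ω' ∧ stoppedWalk ξ a b n ω' ≤ b := by
  induction n with
  | zero => show a ≤ ξ 0 ω' ∧ ξ 0 ω' ≤ b; rw [h0]; exact ⟨haz, hzb⟩
  | succ n ih =>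
    rw [stoppedWalk_succ]
    by_cases hn : stoppedWalk ξ a b n ω' = a ∨ stoppedWalk ξ a b n ω' = b
    · rw [if_pos hn]; exact ih
    · rw [if_neg hn]
      have hEq := stoppedWalk_eq_of_ne ξ a b n ω' hn
      rw [hEq] at ih hn
      push_neg at hn
      rcases hG n with h | h <;> rw [h] <;> omega

lemma stoppedWalk_freeze (N : ℕ) (ω' : Ω)
    (hmin : ∀ k < N, ¬ (ξ k ω' = a ∨ ξ k ω' = b))
    (hN : ξ N ω' = a ∨ ξ N ω' = b) (n : ℕ) (hn : N ≤ n) :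
    stoppedWalk ξ a b n ω' = ξ N ω' := by
  have hYN : stoppedWalk ξ a b N ω' = ξ N ω' := by
    cases N with
    | zero => rfl
    | succ m =>
      have : stoppedWalk ξ a b m ω' = ξ m ω' :=
        stoppedWalk_eq_of_not_hit ξ a b m ω' (fun k hk => hmin k (by omega))
      rw [stoppedWalk_succ, this, if_neg (hmin m (by omega))]
  induction n with
  | zero => have : N = 0 := by omega
            rw [this] at hYN ⊢; exact hYN
  | succ n ih =>
    rcases Nat.lt_or_ge N (n+1) with h | h
    · have hYn : stoppedWalk ξ a b n ω' = ξ N ω' := ih (by omega)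
      rw [stoppedWalk_succ, hYn, if_pos hN]
    · have : N = n + 1 := by omega
      subst this; exact hYN
end walk

noncomputable def hitTime {Ω : Type*} (ξ : ℕ → Ω → ℤ) (c : ℤ) (ω' : Ω) : ℕ∞ :=
  sInf ((fun k : ℕ => (k : ℕ∞)) '' {k : ℕ | ξ k ω' = c})

section hit
variable {Ω : Type*} (ξ : ℕ → Ω → ℤ)

lemma hitTime_le {c : ℤ} {ω' : Ω} {n : ℕ} (h : ξ n ω' = c) : hitTime ξ c ω' ≤ (n : ℕ∞) :=
  sInf_le ⟨n, h, rfl⟩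

lemma le_hitTime {c : ℤ} {ω' : Ω} {n : ℕ} (h : ∀ k, ξ k ω' = c → n ≤ k) :
    (n : ℕ∞) ≤ hitTime ξ c ω' := by
  refine le_sInf ?_
  rintro x ⟨k, hk, rfl⟩
  show (n : ℕ∞) ≤ (k : ℕ∞)
  exact_mod_cast h k hk

lemma hitTime_lt_iff (a b : ℤ) (hab : a ≠ b) (ω' : Ω) :
    hitTime ξ a ω' < hitTime ξ b ω' ↔
      ∃ n, ξ n ω' = a ∧ ∀ k < n, ¬ (ξ k ω' = a ∨ ξ k ω' = b) := by
  constructor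
  · intro h
    have hne : ∃ k, ξ k ω' = a := by
      by_contra hemp
      push_neg at hemp
      have : {k : ℕ | ξ k ω' = a} = ∅ := Set.eq_empty_iff_forall_notMem.2 hemp
      have h2 : hitTime ξ a ω' = ⊤ := by rw [hitTime, this]; simp
      rw [h2] at h
      exact absurd h (not_top_lt)
    have hex : ∃ k, ξ k ω' = a ∨ ξ k ω' = b := hne.imp fun k hk => Or.inl hk
    classical
    set N := Nat.find hex with hN
    have hspec := Nat.find_spec hex
    have hmin : ∀ k < N, ¬ (ξ k ω' = a ∨ ξ k ω' = b) := fun k hk => Nat.find_min hex hk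
    rcases hspec with ha | hb
    · exact ⟨N, ha, hmin⟩
    · exfalso
      have h1 : hitTime ξ b ω' ≤ (N : ℕ∞) := hitTime_le ξ hb
      have h2 : ((N + 1 : ℕ) : ℕ∞) ≤ hitTime ξ a ω' := by
        refine le_hitTime ξ (fun k hk => ?_)
        rcases Nat.lt_or_ge k (N + 1) with hkN | hkN
        · rcases Nat.lt_or_ge k N with hkN' | hkN'
          · exact absurd (Or.inl hk) (hmin k hkN')
          · have : k = N := by omega
            rw [this] at hk
            exact absurd (hk.symm.trans hb) hab
        · exact hkN
      have : hitTime ξ b ω' < hitTime ξ a ω' := by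
        refine lt_of_le_of_lt h1 (lt_of_lt_of_le ?_ h2)
        exact_mod_cast Nat.lt_succ_self N
      exact absurd h (lt_asymm this)
  · rintro ⟨n, hna, hmin⟩
    have h1 : hitTime ξ a ω' ≤ (n : ℕ∞) := hitTime_le ξ hna
    have h2 : ((n + 1 : ℕ) : ℕ∞) ≤ hitTime ξ b ω' := by
      refine le_hitTime ξ (fun k hk => ?_)
      rcases Nat.lt_or_ge k (n + 1) with hkN | hkN
      · rcases Nat.lt_or_ge k n with hkN' | hkN'
        · exact absurd (Or.inr hk) (hmin k hkN')
        · have : k = n := by omega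
          rw [this] at hk
          exact absurd (hna.symm.trans hk) hab
      · exact hkN
    refine lt_of_le_of_lt h1 (lt_of_lt_of_le ?_ h2)
    exact_mod_cast Nat.lt_succ_self n
end hit

theorem gamblers_ruin_rwre (ωm ωp : ℤ → ℝ) (hm : ∀ x, 0 < ωm x) (hp : ∀ x, 0 < ωp x)
    (a b z : ℤ) (hab : a < b) (haz : a ≤ z) (hzb : z ≤ b)
    {Ω : Type*} {m0 : MeasurableSpace Ω} (μ : Measure Ω) [IsProbabilityMeasure μ]
    (ℱ : Filtration ℕ m0) (ξ : ℕ → Ω → ℤ) (hadapted : Adapted ℱ ξ)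
    (h0 : ∀ ω', ξ 0 ω' = z)
    (hstep_up : ∀ n : ℕ,
      μ[Set.indicator {ω' | ξ (n + 1) ω' = ξ n ω' + 1} (fun _ => (1 : ℝ)) | ℱ n]
        =ᵐ[μ] fun ω' => ωp (ξ n ω') / (ωp (ξ n ω') + ωm (ξ n ω')))
    (hstep_down : ∀ n : ℕ,
      μ[Set.indicator {ω' | ξ (n + 1) ω' = ξ n ω' - 1} (fun _ => (1 : ℝ)) | ℱ n]
        =ᵐ[μ] fun ω' => ωm (ξ n ω') / (ωp (ξ n ω') + ωm (ξ n ω'))) :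
    (μ {ω' | hitTime ξ a ω' < hitTime ξ b ω'}).toReal =
      (∑ i ∈ Finset.Icc z (b - 1), Real.exp (potential ωm ωp i)) /
        (∑ j ∈ Finset.Icc a (b - 1), Real.exp (potential ωm ωp j)) := by
  classical
  have hξ : ∀ n, Measurable (ξ n) := fun n => (hadapted n).mono (ℱ.le n) le_rfl
  have hξF : ∀ n, Measurable[ℱ n] (ξ n) := fun n => hadapted n
  set D := ∑ j ∈ Finset.Icc a (b-1), Real.exp (potential ωm ωp j) with hDdef
  have hD : 0 < D := Dpos ωm ωp a b hab
  set f : ℤ → ℝ := hfun ωm ωp a b with hfdef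
  set fc : ℤ → ℝ := fun x => f (max a (min b x)) with hfcdef
  have hfc_eq : ∀ x, a ≤ x → x ≤ b → fc x = f x := by
    intro x h1 h2
    rw [hfcdef]
    simp only
    rw [min_eq_right h2, max_eq_right h1]
  have hfc0 : ∀ x, 0 ≤ fc x := fun x => hfun_nonneg ωm ωp a b _
  have hfc1 : ∀ x, fc x ≤ 1 := fun x => hfun_le_one ωm ωp a b hab _ (le_max_left _ _)
  set Y := stoppedWalk ξ a b with hYdef
  set M : ℕ → Ω → ℝ := fun n ω' => fc (Y n ω') with hMdef
  have hfcmeas : Measurable fc := measurable_of_countable fc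
  have hYmeas : ∀ n, Measurable[ℱ n] (Y n) := by
    intro n
    induction n with
    | zero => exact hξF 0
    | succ n ih =>
      have hcond : MeasurableSet[ℱ (n+1)] {ω' | Y n ω' = a ∨ Y n ω' = b} := by
        have h1 : MeasurableSet[ℱ n] {ω' | Y n ω' = a ∨ Y n ω' = b} := by
          exact ih (show MeasurableSet {x : ℤ | x = a ∨ x = b} from trivial)
        exact ℱ.mono (Nat.le_succ n) _ h1
      have : Y (n+1) = fun ω' =>
          if Y n ω' = a ∨ Y n ω' = b then Y n ω' else ξ (n+1) ω' := rfl
      rw [this]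
      exact Measurable.ite hcond (ih.mono (ℱ.mono (Nat.le_succ n)) le_rfl)
        (hξF (n+1))
  have hMmeas : ∀ n, StronglyMeasurable[ℱ n] (M n) := fun n =>
    (hfcmeas.comp (hYmeas n)).stronglyMeasurable
  have hbdd_int : ∀ (g : Ω → ℝ), AEStronglyMeasurable g μ → (∀ ω', ‖g ω'‖ ≤ 1) →
      Integrable g μ := fun g hg hb =>
    Integrable.mono' (integrable_const 1) hg (Filter.Eventually.of_forall hb)
  have hMnorm : ∀ n ω', ‖M n ω'‖ ≤ 1 := by
    intro n ω'
    rw [Real.norm_eq_abs, abs_le]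
    exact ⟨by linarith [hfc0 (Y n ω')], hfc1 _⟩
  have hMint : ∀ n, Integrable (M n) μ := fun n =>
    hbdd_int _ ((hMmeas n).mono (ℱ.le n)).aestronglyMeasurable (hMnorm n)
  -- the full-measure event of nearest-neighbor steps
  have hGae : ∀ᵐ ω' ∂μ, ∀ k, ξ (k+1) ω' = ξ k ω' + 1 ∨ ξ (k+1) ω' = ξ k ω' - 1 := by
    rw [MeasureTheory.ae_all_iff]
    intro k
    set U : Set Ω := {ω' | ξ (k + 1) ω' = ξ k ω' + 1} with hUdef
    set W : Set Ω := {ω' | ξ (k + 1) ω' = ξ k ω' - 1} with hWdef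
    have hUm : MeasurableSet U := by
      have : U = (fun ω' => ξ (k+1) ω' - ξ k ω') ⁻¹' {1} := by
        ext ω'; simp [hUdef]; omega
      rw [this]
      exact ((hξ (k+1)).sub (hξ k)) trivial
    have hWm : MeasurableSet W := by
      have : W = (fun ω' => ξ (k+1) ω' - ξ k ω') ⁻¹' {-1} := by
        ext ω'; simp [hWdef]; omega
      rw [this]
      exact ((hξ (k+1)).sub (hξ k)) trivial
    have hIu : Integrable (U.indicator fun _ => (1:ℝ)) μ :=
      (integrable_const (1:ℝ)).indicator hUm
    have hIw : Integrable (W.indicator fun _ => (1:ℝ)) μ :=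
      (integrable_const (1:ℝ)).indicator hWm
    have hcadd : μ[(U.indicator fun _ => (1:ℝ)) + (W.indicator fun _ => (1:ℝ)) | ℱ k]
        =ᵐ[μ] fun _ => (1:ℝ) := by
      refine (condExp_add hIu hIw (ℱ k)).trans ?_
      refine ((hstep_up k).add (hstep_down k)).trans ?_
      refine Filter.Eventually.of_forall fun ω' => ?_
      have h := (add_pos (hp (ξ k ω')) (hm (ξ k ω'))).ne'
      show ωp (ξ k ω') / _ + ωm (ξ k ω') / _ = 1
      rw [← add_div, div_self h]
    have hint1 : ∫ ω', ((U.indicator fun _ => (1:ℝ)) + (W.indicator fun _ => (1:ℝ))) ω' ∂μ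
        = 1 := by
      rw [← integral_condExp (m := ℱ k) (μ := μ)
        (f := (U.indicator fun _ => (1:ℝ)) + (W.indicator fun _ => (1:ℝ))) (ℱ.le k)]
      rw [integral_congr_ae hcadd]
      simp [measure_univ]
    have hdisj : Disjoint U W := by
      rw [Set.disjoint_left]
      intro ω' hU hW
      rw [hUdef] at hU; rw [hWdef] at hW
      simp only [Set.mem_setOf_eq] at hU hW
      omega
    have hunion : (U.indicator fun _ => (1:ℝ)) + (W.indicator fun _ => (1:ℝ))
        = (U ∪ W).indicator fun _ => (1:ℝ) := by
      funext ω'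
      exact (congrFun (Set.indicator_union_of_disjoint hdisj fun _ => (1:ℝ)) ω').symm
    rw [hunion] at hint1
    rw [integral_indicator_const (1:ℝ) (hUm.union hWm), smul_eq_mul, mul_one] at hint1
    have hmeasUW : μ (U ∪ W) = 1 := (ENNReal.toReal_eq_one_iff _).1 hint1
    have hcompl : μ ((U ∪ W)ᶜ) = 0 := by
      rw [measure_compl (hUm.union hWm) (measure_ne_top μ _), measure_univ, hmeasUW,
        tsub_self]
    have : ∀ᵐ ω' ∂μ, ω' ∈ U ∪ W := mem_ae_iff.2 hcompl
    filter_upwards [this] with ω' hω'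
    rcases hω' with h | h
    · exact Or.inl h
    · exact Or.inr h
  -- one-step martingale property
  have hind_norm : ∀ (s : Set Ω) (g : Ω → ℝ), (∀ ω', ‖g ω'‖ ≤ 1) →
      ∀ ω', ‖s.indicator g ω'‖ ≤ 1 := by
    intro s g hg ω'
    by_cases h : ω' ∈ s
    · rw [Set.indicator_of_mem h]; exact hg ω'
    · rw [Set.indicator_of_notMem h]; simp
  have hstep : ∀ n, M n =ᵐ[μ] μ[M (n+1) | ℱ n] := by
    intro n
    set A : Set Ω := {ω' | Y n ω' = a ∨ Y n ω' = b} with hAdef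
    have hAmeas : MeasurableSet[ℱ n] A :=
      (hYmeas n) (show MeasurableSet {x : ℤ | x = a ∨ x = b} from trivial)
    set g1 : Ω → ℝ := A.indicator (M n) with hg1def
    set g2 : Ω → ℝ := Aᶜ.indicator (fun ω' => fc (ξ (n+1) ω')) with hg2def
    have hdecomp : M (n+1) = g1 + g2 := by
      funext ω'
      show fc (Y (n+1) ω') = g1 ω' + g2 ω'
      by_cases hω : ω' ∈ A
      · have hc : stoppedWalk ξ a b n ω' = a ∨ stoppedWalk ξ a b n ω' = b := by
          have hc' := hω
          rw [hAdef] at hc'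
          simp only [Set.mem_setOf_eq] at hc'
          rw [hYdef] at hc'
          exact hc'
        have h1 : Y (n+1) ω' = Y n ω' := by
          rw [hYdef, stoppedWalk_succ, if_pos hc]
        rw [h1, hg1def, hg2def, Set.indicator_of_mem hω,
          Set.indicator_of_notMem (by simp [hω]), add_zero]
      · have hc : ¬ (stoppedWalk ξ a b n ω' = a ∨ stoppedWalk ξ a b n ω' = b) := by
          have hc' := hω
          rw [hAdef] at hc'
          simp only [Set.mem_setOf_eq] at hc'
          rw [hYdef] at hc'
          exact hc'
        have h1 : Y (n+1) ω' = ξ (n+1) ω' := by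
          rw [hYdef, stoppedWalk_succ, if_neg hc]
        rw [h1, hg1def, hg2def, Set.indicator_of_notMem hω,
          Set.indicator_of_mem (Set.mem_compl hω), zero_add]
    set p1 : Ω → ℝ := Aᶜ.indicator (fun ω' => fc (ξ n ω' + 1)) with hp1def
    set p2 : Ω → ℝ := Aᶜ.indicator (fun ω' => fc (ξ n ω' - 1)) with hp2def
    set iU : Ω → ℝ := Set.indicator {ω' | ξ (n + 1) ω' = ξ n ω' + 1} (fun _ => (1:ℝ))
      with hiUdef
    set iW : Ω → ℝ := Set.indicator {ω' | ξ (n + 1) ω' = ξ n ω' - 1} (fun _ => (1:ℝ))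
      with hiWdef
    have hUm : MeasurableSet {ω' | ξ (n + 1) ω' = ξ n ω' + 1} := by
      have : {ω' | ξ (n + 1) ω' = ξ n ω' + 1} = (fun ω' => ξ (n+1) ω' - ξ n ω') ⁻¹' {1} := by
        ext ω'; simp; omega
      rw [this]
      exact ((hξ (n+1)).sub (hξ n)) trivial
    have hWm : MeasurableSet {ω' | ξ (n + 1) ω' = ξ n ω' - 1} := by
      have : {ω' | ξ (n + 1) ω' = ξ n ω' - 1} = (fun ω' => ξ (n+1) ω' - ξ n ω') ⁻¹' {-1} := by
        ext ω'; simp; omega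
      rw [this]
      exact ((hξ (n+1)).sub (hξ n)) trivial
    have hiUnorm : ∀ ω', ‖iU ω'‖ ≤ 1 := hind_norm _ _ (fun _ => by simp)
    have hiWnorm : ∀ ω', ‖iW ω'‖ ≤ 1 := hind_norm _ _ (fun _ => by simp)
    have hfcnorm : ∀ (g : Ω → ℤ), ∀ ω', ‖fc (g ω')‖ ≤ 1 := by
      intro g ω'
      rw [Real.norm_eq_abs, abs_le]
      exact ⟨by linarith [hfc0 (g ω')], hfc1 _⟩
    have hp1norm : ∀ ω', ‖p1 ω'‖ ≤ 1 := hind_norm _ _ (hfcnorm _)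
    have hp2norm : ∀ ω', ‖p2 ω'‖ ≤ 1 := hind_norm _ _ (hfcnorm _)
    have hiUint : Integrable iU μ := (integrable_const (1:ℝ)).indicator hUm
    have hiWint : Integrable iW μ := (integrable_const (1:ℝ)).indicator hWm
    have hp1meas : StronglyMeasurable[ℱ n] p1 :=
      ((hfcmeas.comp ((hξF n).add_const 1)).stronglyMeasurable).indicator hAmeas.compl
    have hp2meas : StronglyMeasurable[ℱ n] p2 :=
      ((hfcmeas.comp ((hξF n).sub_const 1)).stronglyMeasurable).indicator hAmeas.compl
    have hiUmeas : AEStronglyMeasurable iU μ :=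
      ((stronglyMeasurable_const.indicator hUm).aestronglyMeasurable)
    have hiWmeas : AEStronglyMeasurable iW μ :=
      ((stronglyMeasurable_const.indicator hWm).aestronglyMeasurable)
    have hprod1int : Integrable (p1 * iU) μ := by
      refine hbdd_int _ (((hp1meas.mono (ℱ.le n)).aestronglyMeasurable).mul hiUmeas) ?_
      intro ω'
      calc ‖p1 ω' * iU ω'‖ = ‖p1 ω'‖ * ‖iU ω'‖ := norm_mul _ _
        _ ≤ 1 * 1 := mul_le_mul (hp1norm ω') (hiUnorm ω') (norm_nonneg _)
            (le_trans (norm_nonneg _) (hp1norm ω'))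
        _ = 1 := mul_one 1
    have hprod2int : Integrable (p2 * iW) μ := by
      refine hbdd_int _ (((hp2meas.mono (ℱ.le n)).aestronglyMeasurable).mul hiWmeas) ?_
      intro ω'
      calc ‖p2 ω' * iW ω'‖ = ‖p2 ω'‖ * ‖iW ω'‖ := norm_mul _ _
        _ ≤ 1 * 1 := mul_le_mul (hp2norm ω') (hiWnorm ω') (norm_nonneg _)
            (le_trans (norm_nonneg _) (hp2norm ω'))
        _ = 1 := mul_one 1
    have hg1sm : StronglyMeasurable[ℱ n] g1 := (hMmeas n).indicator hAmeas
    have hg1int : Integrable g1 μ :=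
      hbdd_int _ ((hg1sm.mono (ℱ.le n)).aestronglyMeasurable) (hind_norm _ _ (hMnorm n))
    have hg2int : Integrable g2 μ := by
      refine hbdd_int _ ?_ (hind_norm _ _ (hfcnorm _))
      exact ((hfcmeas.comp (hξ (n+1))).stronglyMeasurable.indicator
        ((ℱ.le n _ hAmeas).compl)).aestronglyMeasurable
    have hsplit : g2 =ᵐ[μ] p1 * iU + p2 * iW := by
      filter_upwards [hGae] with ω' hG'
      show g2 ω' = p1 ω' * iU ω' + p2 ω' * iW ω'
      by_cases hω : ω' ∈ A
      · have hωc : ω' ∉ Aᶜ := by simp [hω]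
        rw [hg2def, hp1def, hp2def, Set.indicator_of_notMem hωc,
          Set.indicator_of_notMem hωc, Set.indicator_of_notMem hωc]
        ring
      · have hωc : ω' ∈ Aᶜ := Set.mem_compl hω
        rw [hg2def, hp1def, hp2def, Set.indicator_of_mem hωc, Set.indicator_of_mem hωc,
          Set.indicator_of_mem hωc]
        rcases hG' n with h | h
        · have hU1 : iU ω' = 1 := by
            rw [hiUdef, Set.indicator_of_mem (by exact h)]
          have hW0 : iW ω' = 0 := by
            rw [hiWdef, Set.indicator_of_notMem (by simp only [Set.mem_setOf_eq]; omega)]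
          rw [hU1, hW0, h]
          ring
        · have hU0 : iU ω' = 0 := by
            rw [hiUdef, Set.indicator_of_notMem (by simp only [Set.mem_setOf_eq]; omega)]
          have hW1 : iW ω' = 1 := by
            rw [hiWdef, Set.indicator_of_mem (by exact h)]
          rw [hU0, hW1, h]
          ring
    have hcond2 : μ[g2|ℱ n] =ᵐ[μ] p1 * (μ[iU|ℱ n]) + p2 * (μ[iW|ℱ n]) :=
      (condExp_congr_ae hsplit).trans ((condExp_add hprod1int hprod2int (ℱ n)).trans
        ((condExp_mul_of_stronglyMeasurable_left hp1meas hprod1int hiUint).add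
         (condExp_mul_of_stronglyMeasurable_left hp2meas hprod2int hiWint)))
    have hcond2' : μ[g2|ℱ n] =ᵐ[μ]
        p1 * (fun ω' => ωp (ξ n ω') / (ωp (ξ n ω') + ωm (ξ n ω')))
          + p2 * (fun ω' => ωm (ξ n ω') / (ωp (ξ n ω') + ωm (ξ n ω'))) :=
      hcond2.trans (((Filter.EventuallyEq.refl _ p1).mul (hstep_up n)).add
        ((Filter.EventuallyEq.refl _ p2).mul (hstep_down n)))
    have hfinal : (p1 * (fun ω' => ωp (ξ n ω') / (ωp (ξ n ω') + ωm (ξ n ω')))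
          + p2 * (fun ω' => ωm (ξ n ω') / (ωp (ξ n ω') + ωm (ξ n ω'))))
        =ᵐ[μ] Aᶜ.indicator (M n) := by
      filter_upwards [hGae] with ω' hG'
      show p1 ω' * _ + p2 ω' * _ = Aᶜ.indicator (M n) ω'
      by_cases hω : ω' ∈ A
      · have hωc : ω' ∉ Aᶜ := by simp [hω]
        rw [hp1def, hp2def, Set.indicator_of_notMem hωc, Set.indicator_of_notMem hωc,
          Set.indicator_of_notMem hωc]
        ring
      · have hωc : ω' ∈ Aᶜ := Set.mem_compl hω
        have hYn : Y n ω' = ξ n ω' := stoppedWalk_eq_of_ne ξ a b n ω' hω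
        have hIcc : a ≤ Y n ω' ∧ Y n ω' ≤ b :=
          stoppedWalk_mem_Icc ξ a b z haz hzb ω' (h0 ω') hG' n
        have hne : ¬ (Y n ω' = a ∨ Y n ω' = b) := hω
        have hax : a < ξ n ω' := by rw [hYn] at hIcc hne; omega
        have hxb : ξ n ω' < b := by rw [hYn] at hIcc hne; omega
        rw [hp1def, hp2def, Set.indicator_of_mem hωc, Set.indicator_of_mem hωc,
          Set.indicator_of_mem hωc]
        show fc (ξ n ω' + 1) * _ + fc (ξ n ω' - 1) * _ = M n ω'
        have hMn : M n ω' = fc (ξ n ω') := by rw [hMdef]; simp only; rw [hYn]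
        rw [hMn, hfc_eq (ξ n ω' + 1) (by omega) (by omega),
          hfc_eq (ξ n ω' - 1) (by omega) (by omega), hfc_eq (ξ n ω') (by omega) (by omega),
          mul_comm (f (ξ n ω' + 1)), mul_comm (f (ξ n ω' - 1))]
        exact hfun_harmonic ωm ωp a b hm hp hab (ξ n ω') hxb
    have hmain : μ[M (n+1)|ℱ n] =ᵐ[μ] M n := by
      rw [hdecomp]
      calc μ[g1 + g2|ℱ n] =ᵐ[μ] μ[g1|ℱ n] + μ[g2|ℱ n] := condExp_add hg1int hg2int (ℱ n)
        _ =ᵐ[μ] g1 + Aᶜ.indicator (M n) := by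
            rw [condExp_of_stronglyMeasurable (ℱ.le n) hg1sm hg1int]
            exact (Filter.EventuallyEq.refl _ g1).add (hcond2'.trans hfinal)
        _ = M n := by rw [hg1def]; exact Set.indicator_self_add_compl A (M n)
    exact hmain.symm
  have hMart : Martingale M ℱ μ := martingale_nat (fun n => hMmeas n) hMint hstep
  have hIntM : ∀ n, ∫ ω', M n ω' ∂μ = fc z := by
    intro n
    induction n with
    | zero =>
      have : M 0 = fun _ => fc z := by
        funext ω'
        show fc (ξ 0 ω') = fc z
        rw [h0 ω']
      rw [this, integral_const, probReal_univ, one_smul]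
    | succ n ih =>
      rw [← ih]
      have h1 : ∫ ω', M (n+1) ω' ∂μ = ∫ ω', (μ[M (n+1) | ℱ n]) ω' ∂μ :=
        (integral_condExp (m := ℱ n) (μ := μ) (f := M (n+1)) (ℱ.le n)).symm
      rw [h1]
      exact (integral_congr_ae (hstep n)).symm
  have hBdd : ∀ n, eLpNorm (M n) 1 μ ≤ ((1 : NNReal) : ENNReal) := by
    intro n
    refine le_trans (eLpNorm_le_of_ae_bound (C := 1)
      (Filter.Eventually.of_forall (hMnorm n))) ?_
    simp [measure_univ]
  have hconv : ∀ᵐ ω' ∂μ, ∃ c, Filter.Tendsto (fun n => M n ω') Filter.atTop (nhds c) :=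
    hMart.submartingale.exists_ae_tendsto_of_bdd hBdd
  -- almost surely, the walk hits {a, b}
  have hhit : ∀ᵐ ω' ∂μ, ∃ n, ξ n ω' = a ∨ ξ n ω' = b := by
    have hne : (Finset.Icc a (b-1)).Nonempty := ⟨a, by simp [Finset.mem_Icc]; omega⟩
    set c : ℝ := (Finset.Icc a (b-1)).inf' hne (fun i => Real.exp (potential ωm ωp i)) / D
      with hcdef
    have hc0 : 0 < c := div_pos
      (by rw [Finset.lt_inf'_iff]; exact fun i _ => Real.exp_pos _) hD
    filter_upwards [hconv, hGae] with ω' hcv hG'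
    by_contra hno
    push_neg at hno
    obtain ⟨l, hl⟩ := hcv
    have h2 : Filter.Tendsto (fun n => M (n+1) ω' - M n ω') Filter.atTop (nhds 0) := by
      have := (hl.comp (Filter.tendsto_add_atTop_nat 1)).sub hl
      rwa [sub_self] at this
    have h3 : ∀ᶠ n in Filter.atTop, |M (n+1) ω' - M n ω'| < c := by
      have := (Metric.tendsto_nhds.mp h2) c hc0
      filter_upwards [this] with n hn
      rwa [Real.dist_eq, sub_zero] at hn
    obtain ⟨n, hn⟩ := h3.exists
    have hYeq : ∀ k, Y k ω' = ξ k ω' := fun k => by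
      rw [hYdef]
      exact stoppedWalk_eq_of_not_hit ξ a b k ω' (fun j _ => by
        have := hno j; tauto)
    have hIcc : a ≤ Y n ω' ∧ Y n ω' ≤ b :=
      stoppedWalk_mem_Icc ξ a b z haz hzb ω' (h0 ω') hG' n
    have hIcc1 : a ≤ Y (n+1) ω' ∧ Y (n+1) ω' ≤ b :=
      stoppedWalk_mem_Icc ξ a b z haz hzb ω' (h0 ω') hG' (n+1)
    have hno_n := hno n
    have hax : a < ξ n ω' := by
      rw [hYeq n] at hIcc
      rcases hIcc with ⟨h4, _⟩
      rcases lt_or_eq_of_le h4 with h5 | h5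
      · exact h5
      · exact absurd h5.symm (by tauto)
    have hxb : ξ n ω' < b := by
      rw [hYeq n] at hIcc
      rcases hIcc with ⟨_, h4⟩
      rcases lt_or_eq_of_le h4 with h5 | h5
      · exact h5
      · exact absurd h5 (by tauto)
    have hMn : M n ω' = f (ξ n ω') := by
      show fc (Y n ω') = f (ξ n ω')
      rw [hYeq n, hfc_eq _ (by omega) (by omega)]
    have hMn1 : M (n+1) ω' = f (ξ (n+1) ω') := by
      show fc (Y (n+1) ω') = f (ξ (n+1) ω')
      rw [hYeq (n+1)] at hIcc1 ⊢
      rw [hfc_eq _ (by omega) (by omega)]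
    have key : c ≤ |M (n+1) ω' - M n ω'| := by
      rcases hG' n with h | h
      · rw [hMn1, hMn, h, abs_sub_comm, hfdef,
          hfun_sub ωm ωp a b (ξ n ω') (by omega), ← hDdef,
          abs_of_nonneg (div_nonneg (Real.exp_pos _).le hD.le), hcdef]
        exact (div_le_div_iff_of_pos_right hD).2 (Finset.inf'_le _ (by simp [Finset.mem_Icc]; omega))
      · have hsub := hfun_sub ωm ωp a b (ξ n ω' - 1) (by omega)
        rw [sub_add_cancel] at hsub
        rw [hMn1, hMn, h, hfdef, hsub, ← hDdef,
          abs_of_nonneg (div_nonneg (Real.exp_pos _).le hD.le), hcdef]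
        exact (div_le_div_iff_of_pos_right hD).2 (Finset.inf'_le _ (by simp [Finset.mem_Icc]; omega))
    exact absurd hn (not_lt.2 key)
  -- the limit event
  set E : Set Ω := {ω' | ∃ n, ξ n ω' = a ∧ ∀ k < n, ¬ (ξ k ω' = a ∨ ξ k ω' = b)} with hEdef
  have hEmeas : MeasurableSet E := by
    have : E = ⋃ n, ({ω' | ξ n ω' = a} ∩ ⋂ k, ⋂ (_ : k < n),
        {ω' | ¬ (ξ k ω' = a ∨ ξ k ω' = b)}) := by
      ext ω'
      simp only [hEdef, Set.mem_setOf_eq, Set.mem_iUnion, Set.mem_inter_iff, Set.mem_iInter]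
    rw [this]
    refine MeasurableSet.iUnion fun n => MeasurableSet.inter ?_ ?_
    · exact (hξ n) (show MeasurableSet {x : ℤ | x = a} from trivial)
    · refine MeasurableSet.iInter fun k => MeasurableSet.iInter fun _ => ?_
      exact ((hξ k) (show MeasurableSet {x : ℤ | ¬ (x = a ∨ x = b)} from trivial))
  have hML : ∀ᵐ ω' ∂μ, Filter.Tendsto (fun n => M n ω') Filter.atTop
      (nhds (E.indicator (fun _ => (1:ℝ)) ω')) := by
    filter_upwards [hhit, hGae] with ω' hex hG'
    set N := Nat.find hex with hNdef
    have hspec : ξ N ω' = a ∨ ξ N ω' = b := Nat.find_spec hex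
    have hmin : ∀ k < N, ¬ (ξ k ω' = a ∨ ξ k ω' = b) := fun k hk => Nat.find_min hex hk
    have hfr : ∀ n, n ≥ N → M n ω' = fc (ξ N ω') := by
      intro n hn
      show fc (Y n ω') = fc (ξ N ω')
      rw [hYdef, stoppedWalk_freeze ξ a b N ω' hmin hspec n hn]
    have hlim : E.indicator (fun _ => (1:ℝ)) ω' = fc (ξ N ω') := by
      rcases hspec with hA | hB
      · have hE : ω' ∈ E := ⟨N, hA, hmin⟩
        rw [Set.indicator_of_mem hE, hA, hfc_eq a le_rfl hab.le, hfdef,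
          hfun_a ωm ωp a b hab]
      · have hE : ω' ∉ E := by
          rintro ⟨k, hka, hkmin⟩
          rcases Nat.lt_trichotomy k N with h | h | h
          · exact hmin k h (Or.inl hka)
          · subst h
            rw [hka] at hB
            exact hab.ne hB
          · exact hkmin N h (Or.inr hB)
        rw [Set.indicator_of_notMem hE, hB, hfc_eq b hab.le le_rfl, hfdef,
          hfun_b ωm ωp a b]
    rw [hlim]
    exact tendsto_atTop_of_eventually_const hfr
  have hIntL : ∫ ω', E.indicator (fun _ => (1:ℝ)) ω' ∂μ = fc z := by
    have h1 : Filter.Tendsto (fun n => ∫ ω', M n ω' ∂μ) Filter.atTop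
        (nhds (∫ ω', E.indicator (fun _ => (1:ℝ)) ω' ∂μ)) := by
      refine tendsto_integral_of_dominated_convergence (fun _ => (1:ℝ))
        (fun n => ((hMmeas n).mono (ℱ.le n)).aestronglyMeasurable)
        (integrable_const 1)
        (fun n => Filter.Eventually.of_forall (hMnorm n)) hML
    have h2 : (fun n => ∫ ω', M n ω' ∂μ) = fun _ => fc z := funext hIntM
    rw [h2] at h1
    exact (tendsto_nhds_unique tendsto_const_nhds h1).symm
  have hsetEq : {ω' | hitTime ξ a ω' < hitTime ξ b ω'} = E :=
    Set.ext fun ω' => hitTime_lt_iff ξ a b hab.ne ω'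
  rw [hsetEq]
  have h3 : ∫ ω', E.indicator (fun _ => (1:ℝ)) ω' ∂μ = (μ E).toReal := by
    rw [integral_indicator_const (1:ℝ) hEmeas, smul_eq_mul, mul_one]
    rfl
  rw [← h3, hIntL, hfc_eq z haz hzb]
  rfl
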